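/- If the Uniform Random Walk on a connected weighted graph G exists, i.e., the limits u_{xy} = lim_n A_{xy} W_{n-1}(y)/W_n(x) exist for all edges (x,y), then for any walk w = x_0 x_1 ⋯ x_k, the URW probability of w satisfies u(w)/a(w) = lim_n W_{n-k}(x_k)/W_n(x_0). In particular, for any two walks w_1, w_2 of the same length with the same start and end vertices, u(w_1)/a(w_1) = u(w_2)/a(w_2), so the URW is a Doob walk. -/

import Mathlib

open Filter Topology

noncomputable def walkWeight {V : Type*} (A : V → V → ℝ) {n : ℕ} (w : Fin (n+1) → V) : ℝ :=
  ∏ i : Fin n, A (w i.castSucc) (w i.succ)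

def GraphWalk {V : Type*} (A : V → V → ℝ) (n : ℕ) (x : V) : Type _ :=
  {w : Fin (n+1) → V // w 0 = x ∧ ∀ i : Fin n, 0 < A (w i.castSucc) (w i.succ)}

/-- `W_n(x)`: the total weight of walks of length `n` starting at `x`. -/
noncomputable def walkCount {V : Type*} (A : V → V → ℝ) (n : ℕ) (x : V) : ℝ :=
  ∑' w : GraphWalk A n x, walkWeight A w.1

/-- if the Uniform Random Walk exists on a connected weighted graph `G`,
i.e. `u_{xy} = lim_n A_{xy} W_{n-1}(y)/W_n(x)` exists for all edges `(x,y)`, then for any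
walk `w = x_0 x_1 ⋯ x_k` one has `u(w)/a(w) = lim_n W_{n-k}(x_k)/W_n(x_0)`; in particular,
for two walks of the same length with the same start and end points,
`u(w_1)/a(w_1) = u(w_2)/a(w_2)`, i.e. the URW is a Doob walk. -/
theorem urw_is_doob_walk
    {V : Type*} (A : V → V → ℝ)
    (hAsymm : ∀ x y, A x y = A y x)
    (hAnn : ∀ x y, 0 ≤ A x y)
    (hloc : ∀ x, (Function.support (A x)).Finite)
    (hconn : ∀ x y : V, ∃ (k : ℕ) (w : GraphWalk A k x), w.1 (Fin.last k) = y)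
    (hWpos : ∀ (n : ℕ) (x : V), 0 < walkCount A n x)
    (u : V → V → ℝ)
    (hU : ∀ x y, 0 < A x y →
      Tendsto (fun n : ℕ => A x y * walkCount A (n-1) y / walkCount A n x)
        atTop (𝓝 (u x y))) :
    (∀ (k : ℕ) (x : V) (w : GraphWalk A k x),
      Tendsto (fun n : ℕ => walkCount A (n-k) (w.1 (Fin.last k)) / walkCount A n x)
        atTop (𝓝 (walkWeight u w.1 / walkWeight A w.1))) ∧
    (∀ (k : ℕ) (x : V) (w₁ w₂ : GraphWalk A k x),
      w₁.1 (Fin.last k) = w₂.1 (Fin.last k) →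
      walkWeight u w₁.1 / walkWeight A w₁.1 = walkWeight u w₂.1 / walkWeight A w₂.1) := by

  have key : ∀ (k : ℕ) (x : V) (w : GraphWalk A k x),
      Tendsto (fun n : ℕ => walkCount A (n-k) (w.1 (Fin.last k)) / walkCount A n x)
        atTop (𝓝 (walkWeight u w.1 / walkWeight A w.1)) := by
    intro k
    induction k with
    | zero =>
      intro x w
      have hfn : (fun n : ℕ => walkCount A (n-0) (w.1 (Fin.last 0)) / walkCount A n x)
          = fun _ => (1:ℝ) := by
        funext n
        have hx : w.1 (Fin.last 0) = x := by
          have := w.2.1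
          simpa [show Fin.last 0 = 0 from rfl] using this
        rw [hx, Nat.sub_zero, div_self (hWpos n x).ne']
      have h1 : walkWeight u w.1 / walkWeight A w.1 = 1 := by
        simp [walkWeight]
      rw [hfn, h1]
      exact tendsto_const_nhds
    | succ k ih =>
      intro x w
      set y := w.1 (Fin.last k).castSucc with hy
      set z := w.1 (Fin.last (k+1)) with hz
      have hedge : 0 < A y z := by
        have := w.2.2 (Fin.last k)
        simpa [hy, hz, Fin.succ_last] using this
      let w' : GraphWalk A k x := ⟨fun i => w.1 i.castSucc, by
        refine ⟨by simpa using w.2.1, fun i => ?_⟩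
        have := w.2.2 i.castSucc
        simpa [Fin.succ_castSucc, -Fin.castSucc_succ] using this⟩
      have hlast' : w'.1 (Fin.last k) = y := rfl
      have hwA : walkWeight A w.1 = walkWeight A w'.1 * A y z := by
        simp only [walkWeight]
        rw [Fin.prod_univ_castSucc]
        simp [w', Fin.succ_castSucc, -Fin.castSucc_succ, hy, hz, Fin.succ_last]
      have hwu : walkWeight u w.1 = walkWeight u w'.1 * u y z := by
        simp only [walkWeight]
        rw [Fin.prod_univ_castSucc]
        simp [w', Fin.succ_castSucc, -Fin.castSucc_succ, hy, hz, Fin.succ_last]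
      have hAw'pos : 0 < walkWeight A w'.1 := by
        apply Finset.prod_pos
        intro i _
        exact w'.2.2 i
      have t1 : Tendsto
          (fun n : ℕ => A y z * walkCount A ((n-k)-1) z / walkCount A (n-k) y)
          atTop (𝓝 (u y z)) :=
        (hU y z hedge).comp (tendsto_sub_atTop_nat k)
      have ih' := ih x w'
      rw [hlast'] at ih'
      have tall : Tendsto
          (fun n : ℕ =>
            (A y z * walkCount A ((n-k)-1) z / walkCount A (n-k) y)
              * (walkCount A (n-k) y / walkCount A n x) / A y z)
          atTop (𝓝 (u y z * (walkWeight u w'.1 / walkWeight A w'.1) / A y z)) :=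
        (t1.mul ih').div_const (A y z)
      have hfn : (fun n : ℕ => walkCount A (n-(k+1)) (w.1 (Fin.last (k+1))) / walkCount A n x)
          = fun n : ℕ =>
            (A y z * walkCount A ((n-k)-1) z / walkCount A (n-k) y)
              * (walkCount A (n-k) y / walkCount A n x) / A y z := by
        funext n
        have hsub : n - (k+1) = (n-k) - 1 := by omega
        rw [← hz, hsub]
        have h1 : A y z ≠ 0 := hedge.ne'
        have h2 : walkCount A (n-k) y ≠ 0 := (hWpos (n-k) y).ne'
        have h3 : walkCount A n x ≠ 0 := (hWpos n x).ne'
        field_simp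
      have hval : u y z * (walkWeight u w'.1 / walkWeight A w'.1) / A y z
          = walkWeight u w.1 / walkWeight A w.1 := by
        rw [hwu, hwA]
        have h1 : A y z ≠ 0 := hedge.ne'
        have h2 : walkWeight A w'.1 ≠ 0 := hAw'pos.ne'
        field_simp
      rw [hfn, ← hval]
      exact tall
  refine ⟨key, ?_⟩
  intro k x w₁ w₂ hlast
  have h1 := key k x w₁
  have h2 := key k x w₂
  rw [hlast] at h1
  exact tendsto_nhds_unique h1 h2
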